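/- Let t ≥ 10x ≥ 100, X := t/(2πx), c := 1 + 1/log x, and S₃ := {n ≥ 2 : |n - X| > 2X}. Then ∑_{n ∈ S₃} (log n)/(2πx·n^c·(|n-X| + t^{1/2}/(2πx))) = O((log t)/t^c), with an absolute implied constant. -/

import Mathlib

open Real

set_option maxHeartbeats 1000000 in
theorem S3_sum_bound :
    ∃ K > (0 : ℝ), ∀ x t : ℝ, 10 ≤ x → 10 * x ≤ t →
      (∑' n : ℕ, (if 2 ≤ n ∧ 2 * (t / (2 * π * x)) < |(n : ℝ) - t / (2 * π * x)| then
          Real.log n / (2 * π * x * (n : ℝ) ^ (1 + 1 / Real.log x) *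
            (|(n : ℝ) - t / (2 * π * x)| + Real.sqrt t / (2 * π * x)))
        else 0))
        ≤ K * (Real.log t / t ^ (1 + 1 / Real.log x)) := by
  refine ⟨100, by norm_num, ?_⟩
  intro x t hx ht
  have hπ : 0 < π := pi_pos
  have hπ315 : π < 3.15 := pi_lt_d2
  have hπ314 : 3.14 < π := pi_gt_d2
  have hx0 : (0:ℝ) < x := by linarith
  have ht0 : (0:ℝ) < t := by linarith
  have ht100 : (100:ℝ) ≤ t := by linarith
  have hexp1 : Real.exp 1 < 2.7182818286 := Real.exp_one_lt_d9
  have hexp2 : Real.exp 2 ≤ 9 := by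
    have h2 : Real.exp 2 = Real.exp 1 * Real.exp 1 := by
      rw [← Real.exp_add]; norm_num
    nlinarith [Real.exp_pos 1]
  have hlogx2 : 2 < Real.log x := by
    rw [show (2:ℝ) = Real.log (Real.exp 2) by rw [Real.log_exp]]
    exact Real.log_lt_log (Real.exp_pos 2) (by linarith)
  have hlogx0 : 0 < Real.log x := by linarith
  set ε : ℝ := 1 / Real.log x with hεdef
  have hε0 : 0 < ε := by positivity
  set X : ℝ := t / (2 * π * x) with hXdef
  have hden0 : 0 < 2 * π * x := by positivity
  have hX0 : 0 < X := by positivity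
  have h2πxt : 2 * π * x < t := by nlinarith
  have hX1 : 1 < X := by
    rw [hXdef, lt_div_iff₀ hden0]; linarith
  set M : ℝ := 3 * X with hMdef
  have hM0 : 0 < M := by positivity
  have hM1 : 1 < M := by rw [hMdef]; linarith
  have hMt : M ≤ t := by
    have e : M = (3 * t) / (2 * π * x) := by rw [hMdef, hXdef]; ring
    rw [e, div_le_iff₀ hden0]
    have h3le : (3:ℝ) ≤ 2 * π * x := by nlinarith
    nlinarith [mul_le_mul_of_nonneg_left h3le ht0.le]
  have hlogM0 : 0 ≤ Real.log M := Real.log_nonneg hM1.le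
  set L : ℝ := Real.log M + 2 * Real.log x with hLdef
  have hL0 : 0 ≤ L := by positivity
  have hMε0 : 0 < M ^ ε := Real.rpow_pos_of_pos hM0 ε
  set B : ℝ := 3 / (4 * π * x) * (L / M ^ ε) with hBdef
  have hB0 : 0 ≤ B := by positivity
  clear_value ε X M L B
  -- final numeric bound
  have hlogt0 : 0 < Real.log t := Real.log_pos (by linarith)
  have hLlogt : L ≤ 3 * Real.log t := by
    have h1 : Real.log M ≤ Real.log t := Real.log_le_log hM0 hMt
    have h2 : Real.log x ≤ Real.log t := Real.log_le_log hx0 (by linarith)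
    rw [hLdef]; linarith
  set a : ℝ := 3 / (2 * π * x) with hadef
  have ha0 : 0 < a := by positivity
  have haε0 : 0 < a ^ ε := Real.rpow_pos_of_pos ha0 ε
  have haM : M = a * t := by
    rw [hMdef, hXdef, hadef]; ring
  clear_value a
  have haε : Real.exp (-2) ≤ a ^ ε := by
    have h1 : (x ^ 2)⁻¹ ≤ a := by
      rw [hadef, ← one_div, div_le_div_iff₀ (by positivity) (by positivity)]
      nlinarith
    have h2 : Real.log ((x ^ 2)⁻¹) ≤ Real.log a :=
      Real.log_le_log (by positivity) h1
    have h3 : Real.log ((x ^ 2)⁻¹) = -(2 * Real.log x) := by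
      rw [Real.log_inv, Real.log_pow]
      push_cast; ring
    have h5 : -(2 * Real.log x) * ε ≤ Real.log a * ε := by
      apply mul_le_mul_of_nonneg_right _ hε0.le
      rw [← h3]; exact h2
    have h6 : -(2 * Real.log x) * ε = -2 := by
      rw [hεdef]; field_simp
    rw [Real.rpow_def_of_pos ha0]
    exact Real.exp_le_exp.mpr (by linarith)
  have hfinal : B * (2 / M) ≤ 100 * (Real.log t / t ^ (1 + ε)) := by
    have hM1ε : M ^ (1 + ε) = M * M ^ ε := by
      rw [Real.rpow_add hM0, Real.rpow_one]
    have e1 : B * (2 / M) = a * L / M ^ (1 + ε) := by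
      rw [hM1ε, hBdef, hadef]
      field_simp
      ring
    have hMc : M ^ (1 + ε) = a ^ (1 + ε) * t ^ (1 + ε) := by
      rw [haM, Real.mul_rpow ha0.le ht0.le]
    have hac : a ^ (1 + ε) = a * a ^ ε := by
      rw [Real.rpow_add ha0, Real.rpow_one]
    have htc0 : 0 < t ^ (1 + ε) := Real.rpow_pos_of_pos ht0 _
    have hkey : L ≤ 100 * Real.log t * a ^ ε := by
      have h7 : 3 ≤ 100 * Real.exp (-2) := by
        rw [Real.exp_neg, ← div_eq_mul_inv, le_div_iff₀ (Real.exp_pos 2)]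
        linarith
      have h10 := mul_le_mul_of_nonneg_right haε
        (by positivity : (0:ℝ) ≤ 100 * Real.log t)
      calc L ≤ 3 * Real.log t := hLlogt
        _ ≤ 100 * Real.exp (-2) * Real.log t := by
            have h11 := mul_le_mul_of_nonneg_right h7 hlogt0.le
            linarith
        _ = Real.exp (-2) * (100 * Real.log t) := by ring
        _ ≤ a ^ ε * (100 * Real.log t) := h10
        _ = 100 * Real.log t * a ^ ε := by ring
    rw [e1, hMc, hac]
    rw [div_le_iff₀ (by positivity)]
    have expand : 100 * (Real.log t / t ^ (1 + ε)) * (a * a ^ ε * t ^ (1 + ε))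
        = (100 * Real.log t * a ^ ε) * a := by
      field_simp
    rw [expand]
    calc a * L ≤ a * (100 * Real.log t * a ^ ε) :=
          mul_le_mul_of_nonneg_left hkey ha0.le
      _ = (100 * Real.log t * a ^ ε) * a := by ring
  set h : ℕ → ℝ := fun n => if M < (n:ℝ) then B * ((n:ℝ) ^ 2)⁻¹ else 0 with hhdef
  have hh0 : ∀ n : ℕ, 0 ≤ h n := by
    intro n
    simp only [hhdef]
    split
    · positivity
    · exact le_rfl
  -- pointwise bound
  have hpt : ∀ n : ℕ,
      (if 2 ≤ n ∧ 2 * X < |(n : ℝ) - X| then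
          Real.log n / (2 * π * x * (n : ℝ) ^ (1 + ε) *
            (|(n : ℝ) - X| + Real.sqrt t / (2 * π * x)))
        else 0) ≤ h n := by
    intro n
    by_cases hc : 2 ≤ n ∧ 2 * X < |(n : ℝ) - X|
    · rw [if_pos hc]
      obtain ⟨hn2, hnS⟩ := hc
      have hn2R : (2:ℝ) ≤ (n:ℝ) := by exact_mod_cast hn2
      have hn0 : (0:ℝ) < (n:ℝ) := by linarith
      have hMn : M < (n:ℝ) := by
        rcases lt_abs.mp hnS with h1 | h1
        · rw [hMdef]; linarith
        · exfalso; linarith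
      have hlogn0 : 0 ≤ Real.log n := Real.log_nonneg (by linarith)
      have hr1 : 1 < (n:ℝ) / M := (one_lt_div hM0).mpr hMn
      have hr0 : 0 < (n:ℝ) / M := by linarith
      -- key log bound : log n ≤ L * (n/M)^ε
      have klog : Real.log n ≤ L * ((n:ℝ) / M) ^ ε := by
        have hlogr : Real.log ((n:ℝ) / M) ≤ 2 * Real.log x * ((n:ℝ)/M) ^ (ε/2) := by
          have e1 : Real.log (((n:ℝ)/M) ^ (ε/2)) = (ε/2) * Real.log ((n:ℝ)/M) :=
            Real.log_rpow hr0 _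
          have e2 : Real.log (((n:ℝ)/M) ^ (ε/2)) ≤ ((n:ℝ)/M) ^ (ε/2) := by
            have := Real.log_le_sub_one_of_pos (Real.rpow_pos_of_pos hr0 (ε/2))
            linarith
          have e3 : 2 * Real.log x * (ε/2) = 1 := by
            rw [hεdef]; field_simp
          calc Real.log ((n:ℝ)/M) = (2 * Real.log x * (ε/2)) * Real.log ((n:ℝ)/M) := by
                rw [e3, one_mul]
            _ = 2 * Real.log x * ((ε/2) * Real.log ((n:ℝ)/M)) := by ring
            _ ≤ 2 * Real.log x * (((n:ℝ)/M) ^ (ε/2)) := by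
                rw [e1] at e2
                exact mul_le_mul_of_nonneg_left e2 (by linarith)
        have hsplit : Real.log n = Real.log M + Real.log ((n:ℝ)/M) := by
          rw [← Real.log_mul (ne_of_gt hM0) (ne_of_gt hr0)]
          congr 1
          field_simp
        have hrε1 : (1:ℝ) ≤ ((n:ℝ)/M) ^ ε := by
          rw [show (1:ℝ) = ((n:ℝ)/M) ^ (0:ℝ) by rw [Real.rpow_zero]]
          exact Real.rpow_le_rpow_of_exponent_le hr1.le (by linarith)
        have hrhalf : ((n:ℝ)/M) ^ (ε/2) ≤ ((n:ℝ)/M) ^ ε :=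
          Real.rpow_le_rpow_of_exponent_le hr1.le (by linarith)
        have h1 : Real.log M * 1 ≤ Real.log M * (((n:ℝ)/M) ^ ε) :=
          mul_le_mul_of_nonneg_left hrε1 hlogM0
        have h2 : 2 * Real.log x * (((n:ℝ)/M) ^ (ε/2)) ≤
            2 * Real.log x * (((n:ℝ)/M) ^ ε) :=
          mul_le_mul_of_nonneg_left hrhalf (by linarith)
        have h3 : L * ((n:ℝ)/M) ^ ε =
            Real.log M * (((n:ℝ)/M) ^ ε) + 2 * Real.log x * (((n:ℝ)/M) ^ ε) := by
          rw [hLdef]; ring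
        rw [h3]
        linarith [hsplit, hlogr]
      -- denominator bound
      have hXn3 : X < (n:ℝ)/3 := by
        rw [hMdef] at hMn; linarith
      have hndenom : (2/3) * (n:ℝ) ≤ |(n : ℝ) - X| + Real.sqrt t / (2 * π * x) := by
        have h1 : (n:ℝ) - X ≤ |(n : ℝ) - X| := le_abs_self _
        have h2 : 0 ≤ Real.sqrt t / (2 * π * x) := by positivity
        linarith
      have hnpow0 : 0 < (n:ℝ) ^ (1 + ε) := Real.rpow_pos_of_pos hn0 _
      have step1 : Real.log n / (2 * π * x * (n : ℝ) ^ (1 + ε) *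
            (|(n : ℝ) - X| + Real.sqrt t / (2 * π * x)))
          ≤ Real.log n / (2 * π * x * (n : ℝ) ^ (1 + ε) * ((2/3) * (n:ℝ))) := by
        gcongr
      have step2 : Real.log n / (2 * π * x * (n : ℝ) ^ (1 + ε) * ((2/3) * (n:ℝ)))
          ≤ (L * ((n:ℝ)/M) ^ ε) / (2 * π * x * (n : ℝ) ^ (1 + ε) * ((2/3) * (n:ℝ))) := by
        gcongr
      have hnε0 : 0 < (n:ℝ) ^ (ε:ℝ) := Real.rpow_pos_of_pos hn0 ε
      have step3 : (L * ((n:ℝ)/M) ^ ε) / (2 * π * x * (n : ℝ) ^ (1 + ε) * ((2/3) * (n:ℝ)))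
          = B * ((n:ℝ) ^ 2)⁻¹ := by
        have e1 : (n:ℝ) ^ (1 + ε) = (n:ℝ) * (n:ℝ) ^ (ε:ℝ) := by
          rw [Real.rpow_add hn0, Real.rpow_one]
        have e2 : ((n:ℝ)/M) ^ ε = (n:ℝ) ^ (ε:ℝ) / M ^ ε :=
          Real.div_rpow hn0.le hM0.le ε
        rw [e1, e2, hBdef]
        field_simp
        ring
      simp only [hhdef]
      rw [if_pos hMn]
      calc Real.log n / (2 * π * x * (n : ℝ) ^ (1 + ε) *
            (|(n : ℝ) - X| + Real.sqrt t / (2 * π * x)))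
          ≤ Real.log n / (2 * π * x * (n : ℝ) ^ (1 + ε) * ((2/3) * (n:ℝ))) := step1
        _ ≤ (L * ((n:ℝ)/M) ^ ε) / (2 * π * x * (n : ℝ) ^ (1 + ε) * ((2/3) * (n:ℝ))) := step2
        _ = B * ((n:ℝ) ^ 2)⁻¹ := step3
    · rw [if_neg hc]
      exact hh0 n
  -- nonnegativity of the summand
  have hf0 : ∀ n : ℕ,
      0 ≤ (if 2 ≤ n ∧ 2 * X < |(n : ℝ) - X| then
          Real.log n / (2 * π * x * (n : ℝ) ^ (1 + ε) *
            (|(n : ℝ) - X| + Real.sqrt t / (2 * π * x)))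
        else 0) := by
    intro n
    split
    · rename_i hc
      have hn2R : (2:ℝ) ≤ (n:ℝ) := by exact_mod_cast hc.1
      apply div_nonneg (Real.log_nonneg (by linarith))
      have h1 : 0 ≤ |(n : ℝ) - X| := abs_nonneg _
      have h2 : 0 ≤ Real.sqrt t / (2 * π * x) := by positivity
      have h3 : 0 < (n:ℝ) ^ (1 + ε) := Real.rpow_pos_of_pos (by linarith) _
      positivity
    · exact le_rfl
  -- summability
  have hsumg : Summable (fun n : ℕ => B * ((n:ℝ) ^ 2)⁻¹) :=
    (Real.summable_nat_pow_inv.mpr (by norm_num)).mul_left B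
  have hsumh : Summable h := by
    apply Summable.of_nonneg_of_le hh0 _ hsumg
    intro n
    simp only [hhdef]
    split
    · exact le_rfl
    · positivity
  have hsumf : Summable (fun n : ℕ =>
      (if 2 ≤ n ∧ 2 * X < |(n : ℝ) - X| then
          Real.log n / (2 * π * x * (n : ℝ) ^ (1 + ε) *
            (|(n : ℝ) - X| + Real.sqrt t / (2 * π * x)))
        else 0)) :=
    Summable.of_nonneg_of_le hf0 hpt hsumh
  -- bound tsum h
  have htsumh : ∑' n, h n ≤ B * (2 / M) := by
    apply Summable.tsum_le_of_sum_le hsumh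
    intro s
    have hsub : s.filter (fun n : ℕ => M < (n:ℝ)) ⊆ Finset.Ioo ⌊M⌋₊ (s.sup id + 1) := by
      intro n hn
      rw [Finset.mem_filter] at hn
      rw [Finset.mem_Ioo]
      exact ⟨(Nat.floor_lt hM0.le).mpr hn.2, Nat.lt_succ_of_le (Finset.le_sup (f := id) hn.1)⟩
    calc ∑ n ∈ s, h n
        = ∑ n ∈ s.filter (fun n : ℕ => M < (n:ℝ)), B * ((n:ℝ) ^ 2)⁻¹ := by
          rw [Finset.sum_filter]
      _ ≤ ∑ n ∈ Finset.Ioo ⌊M⌋₊ (s.sup id + 1), B * ((n:ℝ) ^ 2)⁻¹ := by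
          apply Finset.sum_le_sum_of_subset_of_nonneg hsub
          intro i _ _
          positivity
      _ = B * ∑ n ∈ Finset.Ioo ⌊M⌋₊ (s.sup id + 1), ((n:ℝ) ^ 2)⁻¹ := by
          rw [Finset.mul_sum]
      _ ≤ B * (2 / ((⌊M⌋₊:ℝ) + 1)) :=
          mul_le_mul_of_nonneg_left (sum_Ioo_inv_sq_le ⌊M⌋₊ _) hB0
      _ ≤ B * (2 / M) := by
          have hMm : M ≤ (⌊M⌋₊:ℝ) + 1 := (Nat.lt_floor_add_one M).le
          gcongr
  calc (∑' n : ℕ, (if 2 ≤ n ∧ 2 * X < |(n : ℝ) - X| then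
          Real.log n / (2 * π * x * (n : ℝ) ^ (1 + ε) *
            (|(n : ℝ) - X| + Real.sqrt t / (2 * π * x)))
        else 0))
      ≤ ∑' n, h n := Summable.tsum_le_tsum hpt hsumf hsumh
    _ ≤ B * (2 / M) := htsumh
    _ ≤ 100 * (Real.log t / t ^ (1 + ε)) := hfinal
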